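/- The join of two std-good congruences on (ℕ⁺)* is a std-good congruence: if ~ and ≈ are std-good congruences, then the smallest monoid congruence containing both ~ and ≈ (the transitive closure of their union) is a std-congruence and is compatible with restriction to alphabet intervals. -/

import Mathlib

open scoped Classical

/-- Words over the positive integers. -/
abbrev Word : Type := List ℕ+

/-- Evaluation of a word: number of occurrences of each letter. -/
def ev (w : Word) : ℕ+ → ℕ := fun a => w.count a

/-- A monoid congruence on the free monoid `(ℕ⁺)*`. -/
def IsCongruence (r : Word → Word → Prop) : Prop :=
  Equivalence r ∧ ∀ u v u' v', r u v → r u' v' → r (u ++ u') (v ++ v')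

/-- Restriction of a word to the letters belonging to a set `I`. -/
noncomputable def restrictTo (I : Set ℕ+) (w : Word) : Word :=
  w.filter fun a => decide (a ∈ I)

/-- `I` is an interval (order-convex subset) of `ℕ⁺`. -/
def IsIntervalSet (I : Set ℕ+) : Prop :=
  ∀ ⦃a b c : ℕ+⦄, a ∈ I → c ∈ I → a ≤ b → b ≤ c → b ∈ I

/-- Compatibility with restriction to alphabet intervals. -/
def CompatRestrict (r : Word → Word → Prop) : Prop :=
  ∀ I : Set ℕ+, IsIntervalSet I → ∀ u v, r u v → r (restrictTo I u) (restrictTo I v)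

/-- `r` is a `φ`-congruence. -/
def IsPhiCongruence (φ : Word → Word) (r : Word → Word → Prop) : Prop :=
  ∀ u v, r u v ↔ (r (φ u) (φ v) ∧ ev u = ev v)

/-- Standardization. -/
def std (w : Word) : Word :=
  (List.range w.length).map fun i =>
    ⟨((List.range w.length).countP fun j =>
        decide (w.getD j 1 < w.getD i 1 ∨ (w.getD j 1 = w.getD i 1 ∧ j < i))) + 1,
      Nat.succ_pos _⟩

/-- Packing. -/
def pack (w : Word) : Word :=
  w.map fun a => ⟨(w.dedup.countP fun b => decide (b < a)) + 1, Nat.succ_pos _⟩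

theorem parkBad_ex (w : Word) :
    ∃ d : ℕ, 1 ≤ d ∧ (w.countP fun a : ℕ+ => decide ((a : ℕ) ≤ d)) < d :=
  ⟨w.length + 1, Nat.succ_le_succ (Nat.zero_le _), by
    have h : (w.countP fun a : ℕ+ => decide ((a : ℕ) ≤ w.length + 1)) ≤ w.length :=
      List.countP_le_length
    omega⟩

/-- The smallest `d ≥ 1` such that fewer than `d` letters of `w` are `≤ d`. -/
noncomputable def parkBad (w : Word) : ℕ := Nat.find (parkBad_ex w)

/-- One pass of the parkization procedure, with fuel. -/
noncomputable def parkAux : ℕ → Word → Word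
  | 0, w => w
  | f + 1, w =>
    if parkBad w ≤ w.length then
      parkAux f (w.map fun a : ℕ+ => if parkBad w < (a : ℕ) then (a - 1 : ℕ+) else a)
    else w

/-- Parkization. The fuel `(sum of the letters)` always suffices,
since every pass strictly decreases the sum of the letters. -/
noncomputable def park (w : Word) : Word := parkAux (w.map fun a => (a : ℕ)).sum w

/-- Smallest monoid congruence containing `base`. -/
def CongClosure (base : Word → Word → Prop) (u v : Word) : Prop :=
  ∀ r : Word → Word → Prop, IsCongruence r → (∀ x y, base x y → r x y) → r u v

def sylvBase (x y : Word) : Prop :=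
  ∃ (a b c : ℕ+) (v : Word), a ≤ b ∧ b < c ∧
    x = a :: c :: (v ++ [b]) ∧ y = c :: a :: (v ++ [b])

/-- The sylvester congruence. -/
def sylv : Word → Word → Prop := CongClosure sylvBase

def stalBase (x y : Word) : Prop :=
  ∃ (a b : ℕ+) (v : Word), x = b :: a :: (v ++ [b]) ∧ y = a :: b :: (v ++ [b])

/-- The stalactic congruence. -/
def stal : Word → Word → Prop := CongClosure stalBase

def sylvSharpBase (x y : Word) : Prop :=
  ∃ (a b c : ℕ+) (v : Word), a < b ∧ b ≤ c ∧
    x = b :: (v ++ [a, c]) ∧ y = b :: (v ++ [c, a])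

/-- The #-sylvester congruence. -/
def sylvSharp : Word → Word → Prop := CongClosure sylvSharpBase

/-- The taïga congruence: join of the sylvester and stalactic congruences. -/
def taiga : Word → Word → Prop := CongClosure fun u v => sylv u v ∨ stal u v

/-- Planar binary trees with letter labels. -/
inductive BT : Type where
  | leaf : BT
  | node : BT → ℕ+ → BT → BT
deriving DecidableEq

/-- Binary search tree insertion of a letter. -/
def BT.insert : BT → ℕ+ → BT
  | .leaf, l => .node .leaf l .leaf
  | .node L b R, l => if l ≤ b then .node (L.insert l) b R else .node L b (R.insert l)

/-- Binary search tree of a word: insert the letters from right to left. -/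
def bst (w : Word) : BT := w.foldr (fun l t => t.insert l) .leaf

/-- Planar binary trees labelled by a letter and a multiplicity. -/
inductive BSTM : Type where
  | leaf : BSTM
  | node : BSTM → ℕ+ → ℕ+ → BSTM → BSTM   -- left, letter, multiplicity, right
deriving DecidableEq

/-- Insertion of a letter into a binary search tree with multiplicities. -/
def BSTM.insert : BSTM → ℕ+ → BSTM
  | .leaf, l => .node .leaf l 1 .leaf
  | .node L l' k R, l =>
    if l = l' then .node L l' (k + 1) R
    else if l < l' then .node (L.insert l) l' k R
    else .node L l' k (R.insert l)

/-- The `P`-symbol: insert the letters of `w` from right to left. -/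
def Pmap (w : Word) : BSTM := w.foldr (fun l t => t.insert l) .leaf

/-- Letters of a BSTM in left-to-right (infix) order. -/
def BSTM.letters : BSTM → List ℕ+
  | .leaf => []
  | .node L l _ R => L.letters ++ l :: R.letters

/-- The binary search tree property for a BSTM. -/
def BSTM.IsSearchTree : BSTM → Prop
  | .leaf => True
  | .node L l _ R =>
      (∀ x ∈ L.letters, x < l) ∧ (∀ x ∈ R.letters, l < x) ∧
        L.IsSearchTree ∧ R.IsSearchTree

/-- Total multiplicity of a letter in a BSTM. -/
def BSTM.mult : BSTM → ℕ+ → ℕ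
  | .leaf, _ => 0
  | .node L l k R, a => L.mult a + (if a = l then (k : ℕ) else 0) + R.mult a

/-- Size of a BSTM: sum of the multiplicities. -/
def BSTM.size : BSTM → ℕ
  | .leaf => 0
  | .node L _ k R => L.size + (k : ℕ) + R.size

/-- Planar binary trees with multiplicities. -/
inductive BTM : Type where
  | leaf : BTM
  | node : BTM → ℕ+ → BTM → BTM
deriving DecidableEq

/-- Size of a BTM: sum of the multiplicities. -/
def BTM.size : BTM → ℕ
  | .leaf => 0
  | .node L k R => L.size + (k : ℕ) + R.size

/-- Number of nodes of a BTM. -/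
def BTM.numNodes : BTM → ℕ
  | .leaf => 0
  | .node L _ R => L.numNodes + 1 + R.numNodes

/-- Forgetting the letters of a BSTM gives a BTM. -/
def forgetLetters : BSTM → BTM
  | .leaf => .leaf
  | .node L _ k R => .node (forgetLetters L) k (forgetLetters R)

/-- The `B`-symbol: the BTM underlying `P(w)`. -/
def Bmap (w : Word) : BTM := forgetLetters (Pmap w)

/-- A packed word: its set of letters is `{1, …, k}` for some `k`. -/
def IsPacked (w : Word) : Prop := ∀ a ∈ w, ∀ b : ℕ+, b ≤ a → b ∈ w

/-- Number of packed words inserting to the BTM `T`. -/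
noncomputable def fT (T : BTM) : ℕ :=
  Set.ncard {w : Word | IsPacked w ∧ Bmap w = T}

/-- The hook-type product over the subtrees of a BTM. -/
def hookProd : BTM → ℕ
  | .leaf => 1
  | .node L k R =>
      (BTM.node L k R).size * ((k : ℕ) - 1).factorial * hookProd L * hookProd R

/-- Label the nodes of a BTM in infix order starting from a given letter;
returns the labelled tree and the next unused letter. -/
def infixLabelAux : BTM → ℕ+ → BSTM × ℕ+
  | .leaf, n => (.leaf, n)
  | .node L k R, n =>
    let p := infixLabelAux L n
    let q := infixLabelAux R (p.2 + 1)
    (.node p.1 p.2 k q.1, q.2)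

/-- Label the nodes of a BTM by `1, …, k` in infix order. -/
def infixLabel (T : BTM) : BSTM := (infixLabelAux T 1).1

namespace SG

/-- auxiliary rank count -/
def rk (w : Word) (i : ℕ) : ℕ :=
  (List.range w.length).countP fun j =>
    decide (w.getD j 1 < w.getD i 1 ∨ (w.getD j 1 = w.getD i 1 ∧ j < i))

lemma std_eq (w : Word) :
    std w = (List.range w.length).map fun i => (⟨rk w i + 1, Nat.succ_pos _⟩ : ℕ+) := rfl

lemma std_length (w : Word) : (std w).length = w.length := by
  rw [std_eq]; exact (List.length_map _).trans List.length_range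

lemma std_getElem (w : Word) (i : ℕ) (hi : i < w.length) :
    (std w)[i]'(by simpa [std_length] using hi) = (⟨rk w i + 1, Nat.succ_pos _⟩ : ℕ+) := by
  simp [std_eq]
  erw [List.getElem_map, List.getElem_range]

lemma countP_or {α : Type*} (p q : α → Bool) (l : List α) (h : ∀ x ∈ l, ¬(p x ∧ q x)) :
    l.countP (fun x => p x || q x) = l.countP p + l.countP q := by
  induction l with
  | nil => simp
  | cons a t ih =>
    have ha := h a (by simp)
    have ht : ∀ x ∈ t, ¬(p x ∧ q x) := fun x hx => h x (by simp [hx])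
    cases hp : p a with
    | true =>
      cases hq : q a with
      | true => exact absurd ⟨hp, hq⟩ ha
      | false => simp [List.countP_cons, hp, hq, ih ht]; omega
    | false =>
      cases hq : q a <;> simp [List.countP_cons, hp, hq, ih ht] <;> omega

lemma countP_lt {α : Type*} (p q : α → Bool) (l : List α) (hpq : ∀ x ∈ l, p x → q x)
    (a : α) (ha : a ∈ l) (hpa : ¬ p a = true) (hqa : q a = true) :
    l.countP p < l.countP q := by
  induction l with
  | nil => simp at ha
  | cons b t ih =>
    rcases List.mem_cons.mp ha with rfl | hat
    · have h1 : t.countP p ≤ t.countP q :=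
        List.countP_mono_left (fun x hx => hpq x (by simp [hx]))
      simp only [List.countP_cons]
      have h2 : (if p a = true then 1 else 0) = 0 := by simp [hpa]
      rw [h2, if_pos hqa]
      omega
    · have h1 := ih (fun x hx => hpq x (by simp [hx])) hat
      simp only [List.countP_cons]
      have h2 : (if p b = true then 1 else 0) ≤ (if q b = true then 1 else 0) := by
        by_cases hb : p b = true
        · simp [hb, hpq b (by simp) hb]
        · simp [hb]
      omega

lemma countP_range_getD {α : Type*} (l : List α) (d : α) (p : α → Bool) :
    (List.range l.length).countP (fun j => p (l.getD j d)) = l.countP p := by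
  induction l using List.reverseRecOn with
  | nil => simp
  | append_singleton t x ih =>
    rw [List.length_append, List.length_singleton, List.range_succ, List.countP_append,
      List.countP_append]
    congr 1
    · rw [← ih]
      apply List.countP_congr
      intro j hj
      have hjl : j < t.length := List.mem_range.mp hj
      rw [List.getD_append _ _ _ _ hjl]
    · simp [List.countP_cons, List.getD, List.getElem?_concat_length]

lemma rk_lt_length (w : Word) (i : ℕ) (hi : i < w.length) : rk w i < w.length := by
  have := countP_lt (l := List.range w.length)
    (fun j => decide (w.getD j 1 < w.getD i 1 ∨ (w.getD j 1 = w.getD i 1 ∧ j < i)))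
    (fun _ => true) (by intro x _ _; rfl) i (List.mem_range.mpr hi)
    (by simp) (by simp)
  simpa [rk, List.countP_true] using this

lemma rk_strict (w : Word) (i j : ℕ) (hi : i < w.length) (hj : j < w.length)
    (h : w.getD i 1 < w.getD j 1 ∨ (w.getD i 1 = w.getD j 1 ∧ i < j)) :
    rk w i < rk w j := by
  apply countP_lt _ _ _ _ i (List.mem_range.mpr hi)
  · simp
  · simp only [decide_eq_true_eq]
    rcases h with h | ⟨h1, h2⟩
    · exact Or.inl h
    · exact Or.inr ⟨h1, h2⟩
  · intro x _ hx
    simp only [decide_eq_true_eq] at hx ⊢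
    rcases hx with hx | ⟨hx1, hx2⟩
    · rcases h with h | ⟨h1, _⟩
      · exact Or.inl (hx.trans h)
      · exact Or.inl (h1 ▸ hx)
    · rcases h with h | ⟨h1, h2⟩
      · exact Or.inl (hx1 ▸ h)
      · exact Or.inr ⟨hx1.trans h1, hx2.trans h2⟩

lemma rk_inj (w : Word) (i j : ℕ) (hi : i < w.length) (hj : j < w.length)
    (h : rk w i = rk w j) : i = j := by
  by_contra hne
  rcases lt_trichotomy (w.getD i 1) (w.getD j 1) with hlt | heq | hgt
  · exact absurd h (Nat.ne_of_lt (rk_strict w i j hi hj (Or.inl hlt)))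
  · rcases Nat.lt_or_ge i j with hij | hij
    · exact absurd h (Nat.ne_of_lt (rk_strict w i j hi hj (Or.inr ⟨heq, hij⟩)))
    · have hji : j < i := by omega
      exact absurd h.symm (Nat.ne_of_lt (rk_strict w j i hj hi (Or.inr ⟨heq.symm, hji⟩)))
  · exact absurd h.symm (Nat.ne_of_lt (rk_strict w j i hj hi (Or.inl hgt)))

lemma rk_ge (w : Word) (i : ℕ) :
    w.countP (fun y => decide (y < w.getD i 1)) ≤ rk w i := by
  rw [← countP_range_getD w 1 (fun y => decide (y < w.getD i 1))]
  apply List.countP_mono_left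
  intro j _ hj
  simp only [decide_eq_true_eq] at hj ⊢
  exact Or.inl hj

lemma rk_lt_le (w : Word) (i : ℕ) (hi : i < w.length) :
    rk w i < w.countP (fun y => decide (y ≤ w.getD i 1)) := by
  rw [← countP_range_getD w 1 (fun y => decide (y ≤ w.getD i 1))]
  refine countP_lt _ _ _ ?_ i (List.mem_range.mpr hi) ?_ ?_
  · intro j _ hj
    simp only [decide_eq_true_eq] at hj ⊢
    rcases hj with hj | ⟨hj, _⟩
    · exact hj.le
    · exact hj.le
  · simp
  · simp

lemma sorted_getD (s : Word) (hs : s.Pairwise (· ≤ ·)) (k : ℕ) (x : ℕ+)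
    (h1 : s.countP (fun y => decide (y < x)) ≤ k)
    (h2 : k < s.countP (fun y => decide (y ≤ x))) : s.getD k 1 = x := by
  induction s generalizing k with
  | nil => simp at h2
  | cons h t ih =>
    have hrel : ∀ y ∈ t, h ≤ y := fun y hy => (List.pairwise_cons.mp hs).1 y hy
    have hts : t.Pairwise (· ≤ ·) := (List.pairwise_cons.mp hs).2
    rcases lt_trichotomy h x with hlt | heq | hgt
    · have e1 : List.countP (fun y => decide (y < x)) (h :: t)
          = List.countP (fun y => decide (y < x)) t + 1 := by
        simp [List.countP_cons, hlt]
      have e2 : List.countP (fun y => decide (y ≤ x)) (h :: t)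
          = List.countP (fun y => decide (y ≤ x)) t + 1 := by
        simp [List.countP_cons, hlt.le]
      rw [e1] at h1
      rw [e2] at h2
      have hk : 1 ≤ k := by omega
      obtain ⟨k', rfl⟩ : ∃ k', k = k' + 1 := ⟨k - 1, by omega⟩
      simpa using ih hts k' (by omega) (by omega)
    · subst heq
      rcases Nat.eq_zero_or_pos k with rfl | hk
      · rfl
      · have e0 : List.countP (fun y => decide (y < h)) t = 0 := by
          apply List.countP_eq_zero.mpr
          intro y hy
          simpa using (hrel y hy)
        have e2 : List.countP (fun y => decide (y ≤ h)) (h :: t)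
            = List.countP (fun y => decide (y ≤ h)) t + 1 := by
          simp [List.countP_cons]
        obtain ⟨k', rfl⟩ : ∃ k', k = k' + 1 := ⟨k - 1, by omega⟩
        rw [e2] at h2
        simpa using ih hts k' (by omega) (by omega)
    · exfalso
      have e2 : List.countP (fun y => decide (y ≤ x)) (h :: t) = 0 := by
        apply List.countP_eq_zero.mpr
        intro y hy
        rcases List.mem_cons.mp hy with rfl | hyt
        · simpa using not_le.mpr hgt
        · simpa using not_le.mpr (lt_of_lt_of_le hgt (hrel y hyt))
      omega

/-- the sorted version of a word -/
def sortedW (u : Word) : Word := List.insertionSort (· ≤ ·) u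

lemma sortedW_sorted (u : Word) : (sortedW u).Pairwise (· ≤ ·) :=
  List.pairwise_insertionSort _ u

lemma sortedW_perm (u : Word) : (sortedW u).Perm u := List.perm_insertionSort _ u

lemma sort_getD_rk (u : Word) (i : ℕ) (hi : i < u.length) :
    (sortedW u).getD (rk u i) 1 = u.getD i 1 := by
  apply sorted_getD _ (sortedW_sorted u)
  · rw [(sortedW_perm u).countP_eq]
    exact rk_ge u i
  · rw [(sortedW_perm u).countP_eq]
    exact rk_lt_le u i hi

/-- destandardization map associated with `u` -/
def dstd (u : Word) : ℕ+ → ℕ+ := fun k => (sortedW u).getD ((k : ℕ) - 1) 1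

lemma map_dstd_std (u : Word) : (std u).map (dstd u) = u := by
  apply List.ext_getElem
  · simp [std_length]
  · intro i h1 h2
    rw [List.getElem_map]
    rw [std_getElem u i (by simpa [std_length] using h2)]
    show (sortedW u).getD (rk u i + 1 - 1) 1 = u[i]
    rw [Nat.add_sub_cancel]
    rw [sort_getD_rk u i (by simpa [std_length] using h2)]
    exact List.getD_eq_getElem u 1 _

lemma countP_eq_one {α : Type*} (l : List α) (p : α → Bool) (hn : l.Nodup)
    (a : α) (ha : a ∈ l) (hpa : p a)
    (huniq : ∀ b ∈ l, p b → b = a) : l.countP p = 1 := by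
  induction l with
  | nil => simp at ha
  | cons h t ih =>
    have hnd := List.nodup_cons.mp hn
    rcases List.mem_cons.mp ha with rfl | hat
    · have h0 : t.countP p = 0 := by
        apply List.countP_eq_zero.mpr
        intro b hb hpb
        exact absurd ((huniq b (by simp [hb]) hpb) ▸ hb) hnd.1
      simp [List.countP_cons, hpa, h0]
    · have hne : ¬ p h = true := by
        intro hph
        exact absurd ((huniq h (by simp) hph) ▸ hat) hnd.1
      have := ih hnd.2 hat (fun b hb hpb => huniq b (by simp [hb]) hpb)
      simp [List.countP_cons, hne, this]

lemma count_std (u : Word) (a : ℕ+) :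
    (std u).count a = if (a : ℕ) ≤ u.length then 1 else 0 := by
  have hc : (std u).count a
      = (List.range u.length).countP (fun i => decide ((⟨rk u i + 1, Nat.succ_pos _⟩ : ℕ+) = a)) := by
    rw [std_eq, List.count]; erw [List.countP_map]
    apply List.countP_congr
    intro i _
    exact beq_iff_eq.trans decide_eq_true_iff.symm
  rw [hc]
  split
  case isTrue hle =>
    -- a = ⟨k+1⟩ with k = a - 1 < n
    have ha1 : 1 ≤ (a : ℕ) := a.one_le
    set k := (a : ℕ) - 1 with hk
    have hkn : k < u.length := by omega
    -- surjectivity via Finset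
    have hinj : Set.InjOn (rk u) ↑(Finset.range u.length) := by
      intro i hi j hj hij
      exact rk_inj u i j (by simpa using hi) (by simpa using hj) hij
    have hcard : (Finset.image (rk u) (Finset.range u.length)).card = u.length := by
      rw [Finset.card_image_of_injOn hinj, Finset.card_range]
    have hsub : Finset.image (rk u) (Finset.range u.length) ⊆ Finset.range u.length := by
      intro x hx
      obtain ⟨i, hi, rfl⟩ := Finset.mem_image.mp hx
      exact Finset.mem_range.mpr (rk_lt_length u i (Finset.mem_range.mp hi))
    have heq : Finset.image (rk u) (Finset.range u.length) = Finset.range u.length :=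
      Finset.eq_of_subset_of_card_le hsub (by rw [hcard, Finset.card_range])
    have hkmem : k ∈ Finset.image (rk u) (Finset.range u.length) := by
      rw [heq]; exact Finset.mem_range.mpr hkn
    obtain ⟨i0, hi0, hrk0⟩ := Finset.mem_image.mp hkmem
    apply countP_eq_one _ _ List.nodup_range i0 (by simpa using hi0)
    · simp only [decide_eq_true_eq]
      apply Subtype.ext
      show rk u i0 + 1 = (a : ℕ)
      omega
    · intro j hj hpj
      simp only [decide_eq_true_eq] at hpj
      have : rk u j + 1 = (a : ℕ) := by
        have := congrArg (PNat.val) hpj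
        simpa using this
      exact rk_inj u j i0 (List.mem_range.mp hj) (Finset.mem_range.mp hi0) (by omega)
  case isFalse hgt =>
    apply List.countP_eq_zero.mpr
    intro i hi hp
    simp only [decide_eq_true_eq] at hp
    have : rk u i + 1 = (a : ℕ) := by
      have := congrArg (PNat.val) hp
      simpa using this
    have := rk_lt_length u i (List.mem_range.mp hi)
    omega

lemma count_eq_countP' (w : Word) (a : ℕ+) :
    w.count a = w.countP (fun y => decide (y = a)) := by
  rw [List.count]
  apply List.countP_congr
  intro y _
  simp

lemma mem_of_le_length (w : Word)
    (hcount : ∀ a : ℕ+, w.count a = if (a : ℕ) ≤ w.length then 1 else 0)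
    (a : ℕ+) (ha : (a : ℕ) ≤ w.length) : a ∈ w := by
  have := hcount a
  rw [if_pos ha] at this
  exact List.count_pos_iff.mp (by omega)

lemma le_length_of_mem (w : Word)
    (hcount : ∀ a : ℕ+, w.count a = if (a : ℕ) ≤ w.length then 1 else 0)
    (a : ℕ+) (ha : a ∈ w) : (a : ℕ) ≤ w.length := by
  by_contra h
  have := hcount a
  rw [if_neg h] at this
  exact absurd (List.count_eq_zero.mp this) (by simpa using ha)

lemma indexOf_getElem (w : Word) (a : ℕ+) (j : ℕ) (hj : j < w.length)
    (hja : w[j] = a) (h1 : w.count a = 1) : List.idxOf a w = j := by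
  induction w generalizing j with
  | nil => simp at hj
  | cons h t ih =>
    rcases Nat.eq_zero_or_pos j with rfl | hjpos
    · have : h = a := by simpa using hja
      subst this
      simp [List.idxOf_cons]
    · obtain ⟨j', rfl⟩ : ∃ j', j = j' + 1 := ⟨j - 1, by omega⟩
      have hjt : j' < t.length := by simpa using hj
      have hta : t[j'] = a := by simpa using hja
      have hmem : a ∈ t := hta ▸ List.getElem_mem hjt
      have hne : h ≠ a := by
        intro hha
        subst hha
        rw [List.count_cons_self] at h1
        have : t.count h = 0 := by omega
        exact absurd (List.count_eq_zero.mp this) (by simpa using hmem)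
      have h1t : t.count a = 1 := by
        rwa [List.count_cons_of_ne (by exact fun hc => hne hc)] at h1
      rw [List.idxOf_cons]
      have : (h == a) = false := by simpa using hne
      rw [this]
      simp [ih j' hjt hta h1t]

lemma indexOf_self_getElem (w : Word)
    (hcount : ∀ a : ℕ+, w.count a = if (a : ℕ) ≤ w.length then 1 else 0)
    (j : ℕ) (hj : j < w.length) : List.idxOf (w[j]) w = j := by
  apply indexOf_getElem w _ j hj rfl
  rw [hcount]
  rw [if_pos (le_length_of_mem w hcount _ (List.getElem_mem hj))]

lemma countP_lt_nat (w : Word)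
    (hcount : ∀ a : ℕ+, w.count a = if (a : ℕ) ≤ w.length then 1 else 0)
    (m : ℕ) (h1 : 1 ≤ m) (hm : m ≤ w.length + 1) :
    w.countP (fun (y : ℕ+) => decide ((y : ℕ) < m)) = m - 1 := by
  induction m with
  | zero => omega
  | succ m ih =>
    rcases Nat.eq_zero_or_pos m with rfl | hmpos
    · apply List.countP_eq_zero.mpr
      intro y _
      simp only [decide_eq_true_eq]
      have : 0 < (y : ℕ) := y.2
      omega
    · have hsplit : w.countP (fun (y : ℕ+) => decide ((y : ℕ) < m + 1))
          = w.countP (fun (y : ℕ+) => (decide ((y : ℕ) < m)) || (decide ((y : ℕ) = m))) := by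
        apply List.countP_congr
        intro y _
        by_cases hy1 : (y : ℕ) < m
        · simp [hy1]; omega
        · by_cases hy2 : (y : ℕ) = m
          · simp [hy1, hy2]
          · simp [hy1, hy2]; omega
      rw [hsplit, countP_or]
      · have hc : w.countP (fun (y : ℕ+) => decide ((y : ℕ) = m)) = w.count ⟨m, hmpos⟩ := by
          erw [count_eq_countP']
          apply List.countP_congr
          intro y _
          constructor
          · intro hy
            simp only [decide_eq_true_eq] at hy ⊢
            exact Subtype.ext hy
          · intro hy
            simp only [decide_eq_true_eq] at hy ⊢
            rw [hy]
            rfl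
        rw [hc]; erw [hcount]; rw [ih hmpos (by omega)]
        rw [if_pos (by simpa using (by omega : m ≤ w.length))]
        omega
      · intro y _ hy
        simp only [decide_eq_true_eq] at hy
        omega

lemma countP_lt_letter (w : Word)
    (hcount : ∀ a : ℕ+, w.count a = if (a : ℕ) ≤ w.length then 1 else 0)
    (x : ℕ+) (hx : (x : ℕ) ≤ w.length) :
    w.countP (fun y => decide (y < x)) = (x : ℕ) - 1 := by
  have h1 : w.countP (fun y => decide (y < x)) = w.countP (fun (y : ℕ+) => decide ((y:ℕ) < (x:ℕ))) := by
    apply List.countP_congr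
    intro y _
    simp [← PNat.coe_lt_coe]
  rw [h1, countP_lt_nat w hcount (x : ℕ) x.2 (by omega)]

/-- The key compatibility lemma: standardizing `w.map g` recovers `w`. -/
lemma std_map_eq (w : Word) (g : ℕ+ → ℕ+)
    (hcount : ∀ a : ℕ+, w.count a = if (a : ℕ) ≤ w.length then 1 else 0)
    (hmono : ∀ x y : ℕ+, (y : ℕ) ≤ w.length → x ≤ y → g x ≤ g y)
    (hfiber : ∀ x y : ℕ+, (y : ℕ) ≤ w.length → x < y → g x = g y →
      List.idxOf x w < List.idxOf y w) :
    std (w.map g) = w := by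
  have hlen : (w.map g).length = w.length := by simp
  apply List.ext_getElem
  · simp [std_length]
  · intro i h1 h2
    have hi : i < (w.map g).length := by simpa [std_length] using h1
    rw [std_getElem (w.map g) i hi]
    apply Subtype.ext
    show rk (w.map g) i + 1 = (w[i] : ℕ)
    have hwi_mem : w[i] ∈ w := List.getElem_mem h2
    have hwi_le : ((w[i] : ℕ+) : ℕ) ≤ w.length := le_length_of_mem w hcount _ hwi_mem
    have key : rk (w.map g) i = (w[i] : ℕ) - 1 := by
      have e1 : rk (w.map g) i
          = (List.range w.length).countP (fun j => decide (w.getD j 1 < w.getD i 1)) := by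
        rw [rk]
        rw [hlen]
        apply List.countP_congr
        intro j hj
        have hjn : j < w.length := List.mem_range.mp hj
        have egj : (w.map g).getD j 1 = g (w[j]) := by
          rw [List.getD_eq_getElem _ _ (by simpa using hjn)]
          simp
        have egi : (w.map g).getD i 1 = g (w[i]) := by
          rw [List.getD_eq_getElem _ _ (by simpa using h2)]
          simp
        have edj : w.getD j 1 = w[j] := List.getD_eq_getElem w 1 hjn
        have edi : w.getD i 1 = w[i] := List.getD_eq_getElem w 1 h2
        rw [egj, egi, edj, edi]
        have hwj_le : ((w[j] : ℕ+) : ℕ) ≤ w.length :=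
          le_length_of_mem w hcount _ (List.getElem_mem hjn)
        simp only [decide_eq_true_eq]
        constructor
        · rintro (hlt | ⟨heq, hji⟩)
          · -- g w_j < g w_i implies w_j < w_i
            by_contra hc
            push_neg at hc
            exact absurd (hmono _ _ hwj_le hc) (not_le.mpr hlt)
          · -- same fiber, j < i
            rcases lt_trichotomy (w[j]) (w[i]) with h' | h' | h'
            · exact h'
            · exfalso
              have : i = j := by
                have e1 := indexOf_self_getElem w hcount j hjn
                have e2 := indexOf_self_getElem w hcount i h2
                rw [← h'] at e2
                omega
              omega
            · exfalso
              have := hfiber (w[i]) (w[j]) hwj_le h' heq.symm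
              rw [indexOf_self_getElem w hcount j hjn,
                indexOf_self_getElem w hcount i h2] at this
              omega
        · intro hlt
          have hle : g (w[j]) ≤ g (w[i]) := hmono _ _ hwi_le hlt.le
          rcases lt_or_eq_of_le hle with h' | h'
          · exact Or.inl h'
          · refine Or.inr ⟨h', ?_⟩
            have := hfiber (w[j]) (w[i]) hwi_le hlt h'
            rwa [indexOf_self_getElem w hcount j hjn,
              indexOf_self_getElem w hcount i h2] at this
      rw [e1, countP_range_getD w 1 (fun y => decide (y < w.getD i 1))]
      have edi : w.getD i 1 = w[i] := List.getD_eq_getElem w 1 h2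
      rw [edi]
      exact countP_lt_letter w hcount _ hwi_le
    have : 0 < (w[i] : ℕ) := (w[i]).2
    omega


lemma isIntervalSet_Icc (a b : ℕ+) : IsIntervalSet (Set.Icc a b) := by
  intro x y z hx hz hxy hyz
  exact ⟨hx.1.trans hxy, hyz.trans hz.2⟩

lemma restrictTo_append (I : Set ℕ+) (u v : Word) :
    restrictTo I (u ++ v) = restrictTo I u ++ restrictTo I v := by
  simp [restrictTo, List.filter_append]

lemma count_restrictTo (I : Set ℕ+) (w : Word) (x : ℕ+) :
    (restrictTo I w).count x = if x ∈ I then w.count x else 0 := by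
  unfold restrictTo
  split
  case isTrue h => exact List.count_filter (by simpa using h)
  case isFalse h =>
    apply List.count_eq_zero.mpr
    intro hmem
    exact h (by simpa using (List.of_mem_filter hmem))

lemma mem_restrictTo_pair (c : ℕ+) (w : Word) (x : ℕ+)
    (hx : x ∈ restrictTo (Set.Icc c (c+1)) w) : x = c ∨ x = c + 1 := by
  have h1 : x ∈ Set.Icc c (c+1) := by simpa using (List.of_mem_filter hx)
  obtain ⟨hl, hr⟩ := h1
  have hl' : (c : ℕ) ≤ (x : ℕ) := hl
  have hr' : (x : ℕ) ≤ (c : ℕ) + 1 := by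
    have := hr
    simpa [PNat.add_coe, ← PNat.coe_le_coe] using this
  rcases Nat.eq_or_lt_of_le hl' with h | h
  · exact Or.inl (PNat.coe_injective h.symm)
  · right
    apply PNat.coe_injective
    simp only [PNat.add_coe, PNat.one_coe]
    omega

lemma all_eq_single (t : Word) (d : ℕ+) (h : ∀ x ∈ t, x = d) (hc : t.count d ≤ 1) :
    t = [] ∨ t = [d] := by
  cases t with
  | nil => exact Or.inl rfl
  | cons x t' =>
    have hx : x = d := h x (by simp)
    subst hx
    rw [List.count_cons_self] at hc
    have h0 : t'.count x = 0 := by omega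
    have : t' = [] := by
      cases t' with
      | nil => rfl
      | cons y t'' =>
        have hy : y = x := h y (by simp)
        subst hy
        rw [List.count_cons_self] at h0
        omega
    subst this
    exact Or.inr rfl

lemma classify_pair (t : Word) (c d : ℕ+) (hcd : c ≠ d)
    (hmem : ∀ x ∈ t, x = c ∨ x = d) (hc : t.count c ≤ 1) (hd : t.count d ≤ 1) :
    t = [] ∨ t = [c] ∨ t = [d] ∨ t = [c, d] ∨ t = [d, c] := by
  cases t with
  | nil => exact Or.inl rfl
  | cons x t' =>
    have hx := hmem x (by simp)
    rcases hx with rfl | rfl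
    · -- head is c
      rw [List.count_cons_self] at hc
      have hc0 : t'.count x = 0 := by omega
      have hmem' : ∀ y ∈ t', y = d := by
        intro y hy
        rcases hmem y (by simp [hy]) with rfl | rfl
        · exact absurd (List.count_eq_zero.mp hc0) (by simpa using hy)
        · rfl
      have hd' : t'.count d ≤ 1 := by
        have := List.count_cons_of_ne hcd (l := t') (b := x) (a := d)
        omega
      rcases all_eq_single t' d hmem' hd' with rfl | rfl
      · exact Or.inr (Or.inl rfl)
      · exact Or.inr (Or.inr (Or.inr (Or.inl rfl)))
    · -- head is d
      rw [List.count_cons_self] at hd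
      have hd0 : t'.count x = 0 := by omega
      have hmem' : ∀ y ∈ t', y = c := by
        intro y hy
        rcases hmem y (by simp [hy]) with rfl | rfl
        · rfl
        · exact absurd (List.count_eq_zero.mp hd0) (by simpa using hy)
      have hc' : t'.count c ≤ 1 := by
        have := List.count_cons_of_ne (Ne.symm hcd) (l := t') (b := x) (a := c)
        omega
      rcases all_eq_single t' c hmem' hc' with rfl | rfl
      · exact Or.inr (Or.inr (Or.inl rfl))
      · exact Or.inr (Or.inr (Or.inr (Or.inr rfl)))

lemma filter_pair_indexOf (z : Word) (p : ℕ+ → Bool) (a b : ℕ+)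
    (hab : a ≠ b) (h : z.filter p = [a, b]) :
    List.idxOf a z < List.idxOf b z := by
  induction z with
  | nil => simp at h
  | cons x t ih =>
    have hpa : p a = true := by
      have hmem : a ∈ (x :: t).filter p := by rw [h]; simp
      exact List.of_mem_filter hmem
    have hpb : p b = true := by
      have hmem : b ∈ (x :: t).filter p := by rw [h]; simp
      exact List.of_mem_filter hmem
    cases hp : p x with
    | true =>
      rw [List.filter_cons_of_pos hp] at h
      obtain ⟨rfl, ht⟩ : x = a ∧ t.filter p = [b] := by
        constructor
        · exact (List.cons.injEq _ _ _ _).mp h |>.1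
        · exact (List.cons.injEq _ _ _ _).mp h |>.2
      rw [List.idxOf_cons_self]
      have : List.idxOf b (x :: t) ≠ 0 := by
        rw [List.idxOf_cons]
        have : (x == b) = false := by simpa using hab
        simp [this]
      omega
    | false =>
      rw [List.filter_cons_of_neg (by simp [hp])] at h
      have hxa : x ≠ a := fun hc => by rw [hc] at hp; rw [hpa] at hp; exact Bool.false_ne_true hp.symm
      have hxb : x ≠ b := fun hc => by rw [hc] at hp; rw [hpb] at hp; exact Bool.false_ne_true hp.symm
      have e1 : List.idxOf a (x :: t) = List.idxOf a t + 1 := by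
        rw [List.idxOf_cons]
        have : (x == a) = false := by simpa using hxa
        simp [this]
      have e2 : List.idxOf b (x :: t) = List.idxOf b t + 1 := by
        rw [List.idxOf_cons]
        have : (x == b) = false := by simpa using hxb
        simp [this]
      rw [e1, e2]
      have := ih h
      omega

lemma std_pair_lt (x y : ℕ+) (h : x < y) : std [x, y] = [1, 2] := by
  have h1 : ¬ (y < x) := not_lt.mpr h.le
  have h2 : y ≠ x := ne_of_gt h
  simp [std, List.range_succ, List.countP_cons, h, h1, h2, lt_irrefl]
  erw [List.map_cons, List.map_cons, List.map_nil]
  simp [h, h1, h2]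

lemma std_pair_gt (x y : ℕ+) (h : x < y) : std [y, x] = [2, 1] := by
  have h1 : ¬ (y < x) := not_lt.mpr h.le
  have h2 : x ≠ y := ne_of_lt h
  have h3 : y ≠ x := ne_of_gt h
  simp [std, List.range_succ, List.countP_cons, h, h1, h2, h3, lt_irrefl]
  erw [List.map_cons, List.map_cons, List.map_nil]
  simp [h, h1, h2, h3]

lemma ev_swap (x y : ℕ+) : ev [x, y] = ev [y, x] := by
  funext a
  simp [ev, List.count_cons]
  omega

/-- A std-good congruence relating `[1,2]` and `[2,1]` relates all words of
equal evaluation. -/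
lemma full_of_swap (ρ : Word → Word → Prop) (hc : IsCongruence ρ)
    (hφ : IsPhiCongruence std ρ) (h12 : ρ [1, 2] [2, 1]) :
    ∀ u v : Word, ev u = ev v → ρ u v := by
  have hswap : ∀ x y : ℕ+, x < y → ρ [x, y] [y, x] := by
    intro x y hxy
    apply (hφ [x, y] [y, x]).mpr
    constructor
    · rw [std_pair_lt x y hxy, std_pair_gt x y hxy]
      exact h12
    · exact ev_swap x y
  have hperm : ∀ u v : Word, u.Perm v → ρ u v := by
    intro u v h
    induction h with
    | nil => exact hc.1.refl []
    | cons z _ ih =>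
      have := hc.2 [z] [z] _ _ (hc.1.refl [z]) ih
      simpa using this
    | swap z w l =>
      rcases eq_or_ne z w with rfl | hne
      · exact hc.1.refl _
      · have hzw : ρ [w, z] [z, w] := by
          rcases lt_or_gt_of_ne hne with hlt | hgt
          · exact hc.1.symm (hswap z w hlt)
          · exact hswap w z hgt
        have := hc.2 [w, z] [z, w] l l hzw (hc.1.refl l)
        simpa using this
    | trans _ _ ih1 ih2 => exact hc.1.trans ih1 ih2
  intro u v hev
  apply hperm
  apply List.perm_iff_count.mpr
  intro a
  exact congrFun hev a

section Closure

variable (base : Word → Word → Prop)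

lemma base_sub_closure (u v : Word) (h : base u v) : CongClosure base u v :=
  fun _ _ hb => hb _ _ h

lemma congClosure_isCongruence : IsCongruence (CongClosure base) := by
  refine ⟨⟨?_, ?_, ?_⟩, ?_⟩
  · intro u ρ hρ _
    exact hρ.1.refl u
  · intro u v h ρ hρ hb
    exact hρ.1.symm (h ρ hρ hb)
  · intro u v w h1 h2 ρ hρ hb
    exact hρ.1.trans (h1 ρ hρ hb) (h2 ρ hρ hb)
  · intro u v u' v' h1 h2 ρ hρ hb
    exact hρ.2 _ _ _ _ (h1 ρ hρ hb) (h2 ρ hρ hb)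

end Closure

section Chain

variable (r s : Word → Word → Prop)

/-- chain relation: reflexive-transitive closure of `r ∪ s` -/
def chainR : Word → Word → Prop := Relation.ReflTransGen (fun u v => r u v ∨ s u v)

lemma chain_isCongruence (hrc : IsCongruence r) (hsc : IsCongruence s) :
    IsCongruence (chainR r s) := by
  constructor
  · constructor
    · intro u
      exact Relation.ReflTransGen.refl
    · refine fun {x y} h => (@Relation.ReflTransGen.symmetric _ _ ⟨?_⟩).symm x y h
      intro u v h
      rcases h with h | h
      · exact Or.inl (hrc.1.symm h)
      · exact Or.inr (hsc.1.symm h)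
    · intro u v w h1 h2
      exact h1.trans h2
  · intro u v u' v' h1 h2
    have e1 : chainR r s (u ++ u') (v ++ u') := by
      apply Relation.ReflTransGen.lift (fun x => x ++ u') _ _ _ h1
      intro a b hab
      rcases hab with hab | hab
      · exact Or.inl (hrc.2 _ _ _ _ hab (hrc.1.refl u'))
      · exact Or.inr (hsc.2 _ _ _ _ hab (hsc.1.refl u'))
    have e2 : chainR r s (v ++ u') (v ++ v') := by
      apply Relation.ReflTransGen.lift (fun x => v ++ x) _ _ _ h2
      intro a b hab
      rcases hab with hab | hab
      · exact Or.inl (hrc.2 _ _ _ _ (hrc.1.refl v) hab)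
      · exact Or.inr (hsc.2 _ _ _ _ (hsc.1.refl v) hab)
    exact e1.trans e2

lemma closure_iff_chain (hrc : IsCongruence r) (hsc : IsCongruence s) (u v : Word) :
    CongClosure (fun x y => r x y ∨ s x y) u v ↔ chainR r s u v := by
  constructor
  · intro h
    apply h (chainR r s) (chain_isCongruence r s hrc hsc)
    intro x y hxy
    exact Relation.ReflTransGen.single hxy
  · intro h
    induction h with
    | refl => exact (congClosure_isCongruence _).1.refl u
    | tail _ h2 ih =>
      exact (congClosure_isCongruence _).1.trans ih (base_sub_closure _ _ _ h2)

end Chain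

lemma sortedW_length (u : Word) : (sortedW u).length = u.length :=
  (sortedW_perm u).length_eq

lemma c_lt_succ (c : ℕ+) : c < c + 1 := by
  rw [← PNat.coe_lt_coe]
  simp [PNat.add_coe]

lemma c_ne_succ (c : ℕ+) : c ≠ c + 1 := ne_of_lt (c_lt_succ c)

lemma succ_coe (c : ℕ+) : ((c + 1 : ℕ+) : ℕ) = (c : ℕ) + 1 := by
  simp [PNat.add_coe]

lemma sorted_getD_mono (s : Word) (hs : s.Pairwise (· ≤ ·)) (i j : ℕ) (hij : i ≤ j)
    (hj : j < s.length) : s.getD i 1 ≤ s.getD j 1 := by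
  rcases eq_or_lt_of_le hij with rfl | hlt
  · exact le_refl _
  · rw [List.getD_eq_getElem _ _ (lt_trans hlt hj), List.getD_eq_getElem _ _ hj]
    have := List.Pairwise.rel_get_of_lt hs (a := ⟨i, lt_trans hlt hj⟩) (b := ⟨j, hj⟩)
      (by exact hlt)
    simpa using this

lemma dstd_mono (u : Word) (x y : ℕ+) (hy : (y : ℕ) ≤ u.length) (hxy : x ≤ y) :
    dstd u x ≤ dstd u y := by
  apply sorted_getD_mono _ (sortedW_sorted u)
  · have : (x : ℕ) ≤ (y : ℕ) := hxy
    omega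
  · rw [sortedW_length]
    have : 0 < (y : ℕ) := y.2
    omega

lemma restr_pair_std (u : Word) (c : ℕ+) (hcn : ((c + 1 : ℕ+) : ℕ) ≤ u.length)
    (hg : dstd u c = dstd u (c + 1)) :
    restrictTo (Set.Icc c (c + 1)) (std u) = [c, c + 1] := by
  have hcn' : (c : ℕ) ≤ u.length := by
    rw [succ_coe] at hcn
    omega
  have hc1 : (std u).count c = 1 := by
    rw [count_std, if_pos hcn']
  have hc2 : (std u).count (c + 1) = 1 := by
    rw [count_std, if_pos hcn]
  have hmemc : c ∈ Set.Icc c (c + 1) := ⟨le_refl c, (c_lt_succ c).le⟩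
  have hmemc1 : c + 1 ∈ Set.Icc c (c + 1) := ⟨(c_lt_succ c).le, le_refl _⟩
  have hA1 : (restrictTo (Set.Icc c (c + 1)) (std u)).count c = 1 := by
    rw [count_restrictTo, if_pos hmemc, hc1]
  have hA2 : (restrictTo (Set.Icc c (c + 1)) (std u)).count (c + 1) = 1 := by
    rw [count_restrictTo, if_pos hmemc1, hc2]
  have hclass := classify_pair (restrictTo (Set.Icc c (c + 1)) (std u)) c (c + 1)
    (c_ne_succ c) (mem_restrictTo_pair c (std u)) (le_of_eq hA1) (le_of_eq hA2)
  have hne := c_ne_succ c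
  rcases hclass with hA | hA | hA | hA | hA
  · exfalso; rw [hA] at hA1; simp at hA1
  · exfalso; rw [hA] at hA2
    simp [List.count_cons, List.count_nil, hne, Ne.symm hne] at hA2
  · exfalso; rw [hA] at hA1
    simp [List.count_cons, List.count_nil, hne, Ne.symm hne] at hA1
  · exact hA
  · exfalso
    -- the swapped case contradicts the order of equal letters in std u
    have hidx : List.idxOf (c + 1) (std u) < List.idxOf c (std u) :=
      filter_pair_indexOf (std u) _ (c + 1) c (Ne.symm hne) hA
    have hm1 : (c + 1) ∈ std u := List.count_pos_iff.mp (by omega)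
    have hm2 : c ∈ std u := List.count_pos_iff.mp (by omega)
    set i1 := List.idxOf (c + 1) (std u) with hi1
    set i2 := List.idxOf c (std u) with hi2
    have hb1 : i1 < (std u).length := List.idxOf_lt_length_iff.mpr hm1
    have hb2 : i2 < (std u).length := List.idxOf_lt_length_iff.mpr hm2
    have hv1 : (std u)[i1] = c + 1 := List.getElem_idxOf hb1
    have hv2 : (std u)[i2] = c := List.getElem_idxOf hb2
    have hb1' : i1 < u.length := by rwa [std_length] at hb1
    have hb2' : i2 < u.length := by rwa [std_length] at hb2
    -- letters of u at these positions are equal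
    have hu : u = (std u).map (dstd u) := (map_dstd_std u).symm
    have hl1 : u[i1]'hb1' = dstd u (c + 1) := by
      rw [List.getElem_of_eq hu hb1', List.getElem_map, hv1]
    have hl2 : u[i2]'hb2' = dstd u c := by
      rw [List.getElem_of_eq hu hb2', List.getElem_map, hv2]
    have hletters : u.getD i1 1 = u.getD i2 1 := by
      rw [List.getD_eq_getElem _ _ hb1', List.getD_eq_getElem _ _ hb2', hl1, hl2, hg]
    -- but std values are decreasing: contradiction with rk_strict
    have hrk := rk_strict u i1 i2 hb1' hb2' (Or.inr ⟨hletters, hidx⟩)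
    -- compute rk values from std entries
    have hv1' : rk u i1 + 1 = ((c + 1 : ℕ+) : ℕ) := by
      have := std_getElem u i1 hb1'
      rw [hv1] at this  -- careful orientation
      exact congrArg PNat.val this.symm
    have hv2' : rk u i2 + 1 = (c : ℕ) := by
      have := std_getElem u i2 hb2'
      rw [hv2] at this
      exact congrArg PNat.val this.symm
    rw [succ_coe] at hv1'
    omega

/-- If a word has the same letter counts and the same two-letter interval
restrictions as `std u`, then it is `μ`-compatible: destandardizing it with
`dstd u` and standardizing gives it back. -/
lemma compat_of_inv (u w : Word) (h1 : ∀ a : ℕ+, w.count a = (std u).count a)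
    (h2 : ∀ c : ℕ+, restrictTo (Set.Icc c (c + 1)) w
        = restrictTo (Set.Icc c (c + 1)) (std u)) :
    std (w.map (dstd u)) = w := by
  have hperm : w.Perm (std u) := List.perm_iff_count.mpr h1
  have hlen : w.length = u.length := by rw [hperm.length_eq, std_length]
  apply std_map_eq
  · intro a
    rw [h1 a, count_std, hlen]
  · intro x y hy hxy
    exact dstd_mono u x y (by rw [← hlen]; exact hy) hxy
  · intro x y hy hxy hg
    rw [hlen] at hy
    have step : ∀ c : ℕ+, x ≤ c → c < y →
        List.idxOf c w < List.idxOf (c + 1) w := by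
      intro c hxc hcy
      have hcy1 : c + 1 ≤ y := hcy
      have hcn : ((c + 1 : ℕ+) : ℕ) ≤ u.length := le_trans (by exact_mod_cast hcy1) hy
      have hcle : (c : ℕ) ≤ u.length := by rw [succ_coe] at hcn; omega
      have hgc : dstd u c = dstd u (c + 1) := by
        apply le_antisymm
        · exact dstd_mono u c (c + 1) hcn (c_lt_succ c).le
        · calc dstd u (c + 1) ≤ dstd u y := dstd_mono u (c + 1) y hy hcy1
          _ = dstd u x := hg.symm
          _ ≤ dstd u c := dstd_mono u x c hcle hxc
      have hres := restr_pair_std u c hcn hgc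
      have hresw : restrictTo (Set.Icc c (c + 1)) w = [c, c + 1] := by
        rw [h2 c, hres]
      exact filter_pair_indexOf w _ c (c + 1) (c_ne_succ c) hresw
    have chain : ∀ (k : ℕ) (c : ℕ+), x ≤ c → (c : ℕ) + (k + 1) = (y : ℕ) →
        List.idxOf c w < List.idxOf y w := by
      intro k
      induction k with
      | zero =>
        intro c hxc hcy
        have hy' : c + 1 = y := by
          apply PNat.coe_injective
          rw [succ_coe]
          omega
        have hcylt : c < y := by
          rw [← PNat.coe_lt_coe]
          omega
        rw [← hy']
        exact step c hxc hcylt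
      | succ k ih =>
        intro c hxc hcy
        have hcylt : c < y := by
          rw [← PNat.coe_lt_coe]
          omega
        have e1 := step c hxc hcylt
        have e2 := ih (c + 1) (hxc.trans (c_lt_succ c).le) (by rw [succ_coe]; omega)
        omega
    have hk : (x : ℕ) + (((y : ℕ) - (x : ℕ) - 1) + 1) = (y : ℕ) := by
      have : (x : ℕ) < (y : ℕ) := hxy
      omega
    exact chain ((y : ℕ) - (x : ℕ) - 1) x (le_refl x) hk

lemma ev_eq_of_perm (x y : Word) (h : x.Perm y) : ev x = ev y :=
  funext fun a => h.count_eq a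

lemma perm_of_ev_eq (x y : Word) (h : ev x = ev y) : x.Perm y :=
  List.perm_iff_count.mpr (fun a => congrFun h a)

/-- The case analysis for propagating the invariant along one step. -/
lemma restr_step_eq (c : ℕ+) (A B : Word)
    (hAB : ∀ x : ℕ+, B.count x = A.count x)
    (hA : A = [] ∨ A = [c] ∨ A = [c + 1] ∨ A = [c, c + 1] ∨ A = [c + 1, c])
    (hB : B = [] ∨ B = [c] ∨ B = [c + 1] ∨ B = [c, c + 1] ∨ B = [c + 1, c])
    (hswap1 : ¬(A = [c, c + 1] ∧ B = [c + 1, c]))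
    (hswap2 : ¬(A = [c + 1, c] ∧ B = [c, c + 1])) : B = A := by
  have hne := c_ne_succ c
  have e1 := hAB c
  have e2 := hAB (c + 1)
  have n1 : List.count c ([c] : Word) = 1 := by
    rw [List.count_cons_self, List.count_nil]
  have n2 : List.count (c+1) ([c] : Word) = 0 := by
    rw [List.count_cons_of_ne hne, List.count_nil]
  have n3 : List.count c ([c+1] : Word) = 0 := by
    rw [List.count_cons_of_ne (Ne.symm hne), List.count_nil]
  have n4 : List.count (c+1) ([c+1] : Word) = 1 := by
    rw [List.count_cons_self, List.count_nil]
  have n5 : List.count c ([c, c+1] : Word) = 1 := by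
    rw [List.count_cons_self, List.count_cons_of_ne (Ne.symm hne), List.count_nil]
  have n6 : List.count (c+1) ([c, c+1] : Word) = 1 := by
    rw [List.count_cons_of_ne hne, List.count_cons_self, List.count_nil]
  have n7 : List.count c ([c+1, c] : Word) = 1 := by
    rw [List.count_cons_of_ne (Ne.symm hne), List.count_cons_self, List.count_nil]
  have n8 : List.count (c+1) ([c+1, c] : Word) = 1 := by
    rw [List.count_cons_self, List.count_cons_of_ne hne, List.count_nil]
  have n9 : List.count c ([] : Word) = 0 := List.count_nil (a := c)
  have n10 : List.count (c+1) ([] : Word) = 0 := List.count_nil (a := c+1)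
  rcases hA with rfl | rfl | rfl | rfl | rfl <;> rcases hB with rfl | rfl | rfl | rfl | rfl <;>
    first
      | rfl
      | (exfalso; apply hswap1; constructor <;> rfl)
      | (exfalso; apply hswap2; constructor <;> rfl)
      | (exfalso; omega)

end SG

theorem join_of_stdGood_congruences (r s : Word → Word → Prop)
    (hrc : IsCongruence r) (hrφ : IsPhiCongruence std r) (hrI : CompatRestrict r)
    (hsc : IsCongruence s) (hsφ : IsPhiCongruence std s) (hsI : CompatRestrict s) :
    IsCongruence (CongClosure fun u v => r u v ∨ s u v) ∧
      IsPhiCongruence std (CongClosure fun u v => r u v ∨ s u v) ∧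
      CompatRestrict (CongClosure fun u v => r u v ∨ s u v) := by
  refine ⟨SG.congClosure_isCongruence _, ?_, ?_⟩
  · -- the join is a std-congruence
    intro u v
    constructor
    · -- forward direction
      intro h
      have hchain := (SG.closure_iff_chain r s hrc hsc u v).mp h
      clear h
      induction hchain with
      | refl => exact ⟨(SG.congClosure_isCongruence _).1.refl _, rfl⟩
      | tail h1 h2 ih =>
        obtain ⟨ih1, ih2⟩ := ih
        rcases h2 with hr | hs
        · obtain ⟨h3, h4⟩ := (hrφ _ _).mp hr
          exact ⟨(SG.congClosure_isCongruence _).1.trans ih1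
            (SG.base_sub_closure _ _ _ (Or.inl h3)), ih2.trans h4⟩
        · obtain ⟨h3, h4⟩ := (hsφ _ _).mp hs
          exact ⟨(SG.congClosure_isCongruence _).1.trans ih1
            (SG.base_sub_closure _ _ _ (Or.inr h3)), ih2.trans h4⟩
    · -- backward direction
      rintro ⟨hstd, hev⟩
      by_cases HF : ∃ (c : ℕ+) (a b : Word), (r a b ∨ s a b) ∧
          restrictTo (Set.Icc c (c + 1)) a = [c, c + 1] ∧
          restrictTo (Set.Icc c (c + 1)) b = [c + 1, c]
      · -- some step flips an adjacent pair: that congruence is "full"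
        obtain ⟨c, a, b, hab, ha, hb⟩ := HF
        have hlt : c < c + 1 := SG.c_lt_succ c
        rcases hab with h' | h'
        · have h1 : r (restrictTo (Set.Icc c (c + 1)) a)
              (restrictTo (Set.Icc c (c + 1)) b) :=
            hrI _ (SG.isIntervalSet_Icc _ _) a b h'
          rw [ha, hb] at h1
          have h12 := ((hrφ _ _).mp h1).1
          rw [SG.std_pair_lt c (c + 1) hlt, SG.std_pair_gt c (c + 1) hlt] at h12
          exact SG.base_sub_closure _ u v (Or.inl (SG.full_of_swap r hrc hrφ h12 u v hev))
        · have h1 : s (restrictTo (Set.Icc c (c + 1)) a)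
              (restrictTo (Set.Icc c (c + 1)) b) :=
            hsI _ (SG.isIntervalSet_Icc _ _) a b h'
          rw [ha, hb] at h1
          have h12 := ((hsφ _ _).mp h1).1
          rw [SG.std_pair_lt c (c + 1) hlt, SG.std_pair_gt c (c + 1) hlt] at h12
          exact SG.base_sub_closure _ u v (Or.inr (SG.full_of_swap s hsc hsφ h12 u v hev))
      · -- no step flips an adjacent pair: all chain words are compatible
        have hchain := (SG.closure_iff_chain r s hrc hsc _ _).mp hstd
        have hsorteq : SG.sortedW v = SG.sortedW u := by
          apply List.Perm.eq_of_pairwise' (SG.sortedW_sorted v) (SG.sortedW_sorted u)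
          exact ((SG.sortedW_perm v).trans
            (SG.perm_of_ev_eq v u hev.symm)).trans (SG.sortedW_perm u).symm
        have hdstd_eq : SG.dstd v = SG.dstd u := by
          funext k
          unfold SG.dstd
          rw [hsorteq]
        have hmain : ∀ w, SG.chainR r s w (std v) →
            (∀ x : ℕ+, w.count x = (std u).count x) →
            (∀ c : ℕ+, restrictTo (Set.Icc c (c + 1)) w
                = restrictTo (Set.Icc c (c + 1)) (std u)) →
            CongClosure (fun x y => r x y ∨ s x y) (w.map (SG.dstd u)) v := by
          intro w hw
          induction hw using Relation.ReflTransGen.head_induction_on with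
          | refl =>
            intro _ _
            have he : (std v).map (SG.dstd u) = v := by
              rw [← hdstd_eq, SG.map_dstd_std v]
            rw [he]
            exact (SG.congClosure_isCongruence _).1.refl v
          | @head a w' h' hw' ih =>
            intro h1 h2
            have hevstep : ∀ x : ℕ+, w'.count x = a.count x := by
              rcases h' with hh | hh
              · intro x; exact (congrFun ((hrφ _ _).mp hh).2 x).symm
              · intro x; exact (congrFun ((hsφ _ _).mp hh).2 x).symm
            have h1' : ∀ x : ℕ+, w'.count x = (std u).count x :=
              fun x => (hevstep x).trans (h1 x)
            have h2' : ∀ c : ℕ+, restrictTo (Set.Icc c (c + 1)) w'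
                = restrictTo (Set.Icc c (c + 1)) (std u) := by
              intro c
              rw [← h2 c]
              apply SG.restr_step_eq c
              · intro x
                rw [SG.count_restrictTo, SG.count_restrictTo]
                split
                · exact hevstep x
                · rfl
              · apply SG.classify_pair _ _ _ (SG.c_ne_succ c) (SG.mem_restrictTo_pair c a)
                · rw [SG.count_restrictTo]
                  split
                  · rw [h1 c, SG.count_std]
                    split <;> omega
                  · omega
                · rw [SG.count_restrictTo]
                  split
                  · rw [h1 (c + 1), SG.count_std]
                    split <;> omega
                  · omega
              · apply SG.classify_pair _ _ _ (SG.c_ne_succ c) (SG.mem_restrictTo_pair c w')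
                · rw [SG.count_restrictTo]
                  split
                  · rw [h1' c, SG.count_std]
                    split <;> omega
                  · omega
                · rw [SG.count_restrictTo]
                  split
                  · rw [h1' (c + 1), SG.count_std]
                    split <;> omega
                  · omega
              · rintro ⟨hA, hB⟩
                exact HF ⟨c, a, w', h', hA, hB⟩
              · rintro ⟨hA, hB⟩
                have h'' : r w' a ∨ s w' a := by
                  rcases h' with hh | hh
                  · exact Or.inl (hrc.1.symm hh)
                  · exact Or.inr (hsc.1.symm hh)
                exact HF ⟨c, w', a, h'', hB, hA⟩
            have hcompat1 : std (a.map (SG.dstd u)) = a := SG.compat_of_inv u a h1 h2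
            have hcompat2 : std (w'.map (SG.dstd u)) = w' := SG.compat_of_inv u w' h1' h2'
            have hevmap : ev (a.map (SG.dstd u)) = ev (w'.map (SG.dstd u)) := by
              apply SG.ev_eq_of_perm
              apply List.Perm.map
              exact List.perm_iff_count.mpr (fun x => (hevstep x).symm)
            have hstep : r (a.map (SG.dstd u)) (w'.map (SG.dstd u)) ∨
                s (a.map (SG.dstd u)) (w'.map (SG.dstd u)) := by
              rcases h' with hh | hh
              · left
                apply (hrφ _ _).mpr
                rw [hcompat1, hcompat2]
                exact ⟨hh, hevmap⟩
              · right
                apply (hsφ _ _).mpr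
                rw [hcompat1, hcompat2]
                exact ⟨hh, hevmap⟩
            exact (SG.congClosure_isCongruence _).1.trans
              (SG.base_sub_closure _ _ _ hstep) (ih h1' h2')
        have h0 := hmain (std u) hchain (fun _ => rfl) (fun _ => rfl)
        rw [SG.map_dstd_std u] at h0
        exact h0
  · -- compatibility with restriction
    intro I hI u v h
    refine h (fun x y => CongClosure (fun x y => r x y ∨ s x y)
      (restrictTo I x) (restrictTo I y)) ⟨⟨?_, ?_, ?_⟩, ?_⟩ ?_
    · intro x
      exact (SG.congClosure_isCongruence _).1.refl _
    · intro x y hxy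
      exact (SG.congClosure_isCongruence _).1.symm hxy
    · intro x y z h1 h2
      exact (SG.congClosure_isCongruence _).1.trans h1 h2
    · intro x y x' y' h1 h2
      rw [SG.restrictTo_append, SG.restrictTo_append]
      exact (SG.congClosure_isCongruence _).2 _ _ _ _ h1 h2
    · intro x y hxy
      rcases hxy with hh | hh
      · exact SG.base_sub_closure _ _ _ (Or.inl (hrI I hI x y hh))
      · exact SG.base_sub_closure _ _ _ (Or.inr (hsI I hI x y hh))
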